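/- arXiv:2401.08024 — 2 statements merged into one kernel-verified Lean document; each statement's English description precedes it below -/
import Mathlib

section
/- The sequence {x^k} generated by the AdaPBB iteration is bounded: for all k ≥ 0, ‖x^k − x*‖ ≤ T. -/
open scoped RealInnerProductSpace
open Finset Filter

noncomputable section

/-- The AdaPBB iteration (Algorithm 3 of the paper) in its implicit form, for a composite
objective `F = f + g` where `f : ℝⁿ → ℝ` is convex and differentiable with gradient `f'`,
and `g : ℝⁿ → ℝ` is convex.  `ξ k` is a subgradient of `g` at `x k`. -/
structure AdaPBB (n : ℕ) where
  f : EuclideanSpace ℝ (Fin n) → ℝ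
  g : EuclideanSpace ℝ (Fin n) → ℝ
  f' : EuclideanSpace ℝ (Fin n) → EuclideanSpace ℝ (Fin n)
  x : ℕ → EuclideanSpace ℝ (Fin n)
  ξ : ℕ → EuclideanSpace ℝ (Fin n)
  α : ℕ → ℝ
  θ : ℕ → ℝ
  lam : ℕ → ℝ
  hfconv : ConvexOn ℝ Set.univ f
  hgconv : ConvexOn ℝ Set.univ g
  hgrad : ∀ y, HasGradientAt f (f' y) y
  hmin : ∃ z, ∀ y, f z + g z ≤ f y + g y
  hα0 : 0 < α 0
  hθ0 : 0 ≤ θ 0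
  hsub : ∀ k, ∀ y, g (x k) + ⟪ξ k, y - x k⟫ ≤ g y
  hstep : ∀ k, x (k + 1) = x k - α k • (f' (x k) + ξ (k + 1))
  hne : ∀ k, f' (x (k + 1)) ≠ f' (x k)
  hlam : ∀ k, lam (k + 1) =
    ⟪f' (x (k + 1)) - f' (x k), x (k + 1) - x k⟫ / ‖f' (x (k + 1)) - f' (x k)‖ ^ 2
  hlampos : ∀ k, 0 < lam (k + 1)
  hcase1 : ∀ k, α k ≤ lam (k + 1) →
    α (k + 1) = Real.sqrt (1 + θ k) * α k ∧ θ (k + 1) = α (k + 1) / α k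
  hcase2 : ∀ k, α k / 2 < lam (k + 1) → lam (k + 1) < α k →
    α (k + 1) = α k / Real.sqrt 2 ∧ θ (k + 1) = 0
  hcase3 : ∀ k, lam (k + 1) ≤ α k / 2 →
    α (k + 1) = lam (k + 1) / Real.sqrt 2 ∧ θ (k + 1) = 0

namespace AdaPBB

variable {n : ℕ}

/-- The composite objective `F = f + g`. -/
def F (S : AdaPBB n) (y : EuclideanSpace ℝ (Fin n)) : ℝ := S.f y + S.g y

/-- `B_k` (for `k ≥ 1`), as in (5.13). -/
def B (S : AdaPBB n) (k : ℕ) : ℝ :=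
  if S.α (k - 1) ≤ S.lam k then 0
  else if S.α (k - 1) / 2 < S.lam k then 1
  else (S.α (k - 1) - S.lam k) ^ 2 / S.lam k ^ 2

/-- `E_k` for `k ≥ 1`, as in (5.13). -/
def Eaux (S : AdaPBB n) (k : ℕ) : ℝ :=
  if S.α (k - 1) ≤ S.lam k then 1 / S.α (k - 1) else 0

/-- `E_k`, with the convention `E_0 = (E_1·α_1² - α_0)/α_0²`. -/
def E (S : AdaPBB n) (k : ℕ) : ℝ :=
  if k = 0 then (S.Eaux 1 * S.α 1 ^ 2 - S.α 0) / S.α 0 ^ 2 else S.Eaux k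

/-- The energy `V_k` (for `k ≥ 1`), relative to a minimizer `xs` of `F`. -/
def V (S : AdaPBB n) (xs : EuclideanSpace ℝ (Fin n)) (k : ℕ) : ℝ :=
  ‖S.x k - xs‖ ^ 2 + 2 * S.B k * S.α k ^ 2 * ‖S.f' (S.x (k - 1)) + S.ξ (k - 1)‖ ^ 2 +
    2 * S.α (k - 1) * (1 + S.E (k - 1) * S.α (k - 1)) * (S.F (S.x (k - 1)) - S.F xs)

/-- The energy `U_k` (for `k ≥ 1`), relative to a minimizer `xs` of `F`. -/
def U (S : AdaPBB n) (xs : EuclideanSpace ℝ (Fin n)) (k : ℕ) : ℝ :=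
  ‖S.x k - xs‖ ^ 2 + 2 * S.B k * S.α k ^ 2 * ‖S.f' (S.x (k - 1)) + S.ξ (k - 1)‖ ^ 2 +
    2 * S.E k * S.α k ^ 2 * (S.F (S.x (k - 1)) - S.F xs)

end AdaPBB

end

namespace AdaPBBProof

open Set

variable {n : ℕ}

lemma gradient_convex_ineq (f : EuclideanSpace ℝ (Fin n) → ℝ)
    (f' : EuclideanSpace ℝ (Fin n) → EuclideanSpace ℝ (Fin n))
    (hf : ConvexOn ℝ Set.univ f) (hg : ∀ y, HasGradientAt f (f' y) y)
    (x y : EuclideanSpace ℝ (Fin n)) : f y + ⟪f' y, x - y⟫ ≤ f x := by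
  set φ : ℝ → ℝ := fun t => f (y + t • (x - y)) with hφ
  have hline : HasDerivAt (fun t : ℝ => y + t • (x - y)) (x - y) 0 := by
    simpa using ((hasDerivAt_id (0:ℝ)).smul_const (x - y)).const_add y
  have hd : HasDerivAt φ ⟪f' y, x - y⟫ 0 := by
    have h0 : y + (0:ℝ) • (x - y) = y := by simp
    have hF := hasGradientAt_iff_hasFDerivAt.mp (hg y)
    rw [← h0] at hF
    have := hF.comp_hasDerivAt 0 hline
    simp [InnerProductSpace.toDual_apply_apply] at this
    exact this
  have hconv : ConvexOn ℝ Set.univ φ := by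
    have := hf.comp_affineMap (AffineMap.lineMap y x : ℝ →ᵃ[ℝ] EuclideanSpace ℝ (Fin n))
    simp only [Set.preimage_univ] at this
    have heq : φ = f ∘ (AffineMap.lineMap y x : ℝ →ᵃ[ℝ] EuclideanSpace ℝ (Fin n)) := by
      funext t
      simp [φ, AffineMap.lineMap_apply, add_comm]
    rw [heq]
    exact this
  have hs := hconv.le_slope_of_hasDerivAt (mem_univ (0:ℝ)) (mem_univ (1:ℝ)) zero_lt_one hd
  rw [slope_def_field] at hs
  have h1 : φ 1 = f x := by simp [φ]
  have h0 : φ 0 = f y := by simp [φ]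
  rw [h1, h0] at hs
  linarith

/-- step direction: `w k = ∇f(x^k) + ξ^{k+1}` -/
noncomputable def w (S : AdaPBB n) (k : ℕ) : EuclideanSpace ℝ (Fin n) := S.f' (S.x k) + S.ξ (k + 1)

/-- composite subgradient at `x^k`: `v k = ∇f(x^k) + ξ^k` -/
noncomputable def v (S : AdaPBB n) (k : ℕ) : EuclideanSpace ℝ (Fin n) := S.f' (S.x k) + S.ξ k

/-- gradient difference -/
noncomputable def dl (S : AdaPBB n) (k : ℕ) : EuclideanSpace ℝ (Fin n) := S.f' (S.x (k + 1)) - S.f' (S.x k)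

lemma alpha_pos (S : AdaPBB n) : ∀ k, 0 < S.α k ∧ 0 ≤ S.θ k := by
  intro k
  induction k with
  | zero => exact ⟨S.hα0, S.hθ0⟩
  | succ k ih =>
    rcases le_or_gt (S.α k) (S.lam (k + 1)) with h | h
    · obtain ⟨h1, h2⟩ := S.hcase1 k h
      have hsq : 0 < Real.sqrt (1 + S.θ k) := Real.sqrt_pos.mpr (by linarith [ih.2])
      have hα : 0 < S.α (k + 1) := by rw [h1]; exact mul_pos hsq ih.1
      exact ⟨hα, by rw [h2]; exact (div_pos hα ih.1).le⟩
    · rcases le_or_gt (S.lam (k + 1)) (S.α k / 2) with h' | h'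
      · obtain ⟨h1, h2⟩ := S.hcase3 k h'
        exact ⟨by rw [h1]; exact div_pos (S.hlampos k) (Real.sqrt_pos.mpr two_pos),
          by rw [h2]⟩
      · obtain ⟨h1, h2⟩ := S.hcase2 k h' h
        exact ⟨by rw [h1]; exact div_pos ih.1 (Real.sqrt_pos.mpr two_pos), by rw [h2]⟩

lemma v_succ (S : AdaPBB n) (k : ℕ) : v S (k + 1) = w S k + dl S k := by
  simp only [v, w, dl]; abel

lemma step_eq (S : AdaPBB n) (k : ℕ) : S.x (k + 1) - S.x k = -(S.α k • w S k) := by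
  rw [S.hstep k]; simp only [w]; abel

lemma step_eq' (S : AdaPBB n) (k : ℕ) : S.x k - S.x (k + 1) = S.α k • w S k := by
  rw [← neg_sub (S.x (k + 1)) (S.x k), step_eq, neg_neg]

lemma dl_norm_pos (S : AdaPBB n) (k : ℕ) : 0 < ‖dl S k‖ := by
  rw [norm_pos_iff]
  exact sub_ne_zero.mpr (S.hne k)

lemma lam_id (S : AdaPBB n) (k : ℕ) :
    S.lam (k + 1) * ‖dl S k‖ ^ 2 = -(S.α k * ⟪dl S k, w S k⟫) := by
  have hne : ‖S.f' (S.x (k + 1)) - S.f' (S.x k)‖ ^ 2 ≠ 0 :=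
    pow_ne_zero 2 (norm_ne_zero_iff.mpr (sub_ne_zero.mpr (S.hne k)))
  have h1 : S.lam (k + 1) * ‖dl S k‖ ^ 2 = ⟪dl S k, S.x (k + 1) - S.x k⟫ := by
    simp only [dl]
    rw [S.hlam k, div_mul_cancel₀ _ hne]
  rw [h1, step_eq, inner_neg_right, real_inner_smul_right]

lemma L4 (S : AdaPBB n) (k : ℕ) :
    S.α k * ‖v S (k + 1)‖ ^ 2
      = S.α k * ‖w S k‖ ^ 2 + (S.α k - 2 * S.lam (k + 1)) * ‖dl S k‖ ^ 2 := by
  have h1 := lam_id S k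
  have h2 : ‖v S (k + 1)‖ ^ 2 = ‖w S k‖ ^ 2 + 2 * ⟪w S k, dl S k⟫ + ‖dl S k‖ ^ 2 := by
    rw [v_succ]; exact norm_add_sq_real _ _
  have h3 : ⟪w S k, dl S k⟫ = ⟪dl S k, w S k⟫ := real_inner_comm _ _
  linear_combination S.α k * h2 + 2 * h1 + 2 * S.α k * h3

lemma L5 (S : AdaPBB n) (k : ℕ) : S.lam (k + 1) * ‖dl S k‖ ≤ S.α k * ‖w S k‖ := by
  have h1 := lam_id S k
  have hc : ⟪dl S k, -w S k⟫ ≤ ‖dl S k‖ * ‖-(w S k)‖ := real_inner_le_norm _ _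
  rw [inner_neg_right, norm_neg] at hc
  have hα := (alpha_pos S k).1
  have h2 : S.lam (k + 1) * ‖dl S k‖ ^ 2 ≤ S.α k * (‖dl S k‖ * ‖w S k‖) := by
    have := mul_le_mul_of_nonneg_left hc hα.le
    nlinarith [this, h1]
  have hd := dl_norm_pos S k
  nlinarith [h2, hd]

lemma sub_mono (S : AdaPBB n) (k : ℕ) : ⟪w S k - v S k, w S k⟫ ≤ 0 := by
  have h1 := S.hsub (k + 1) (S.x k)
  have h2 := S.hsub k (S.x (k + 1))
  have hα := (alpha_pos S k).1
  have e1 : ⟪S.ξ (k + 1), S.x k - S.x (k + 1)⟫ = S.α k * ⟪S.ξ (k + 1), w S k⟫ := by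
    rw [step_eq', real_inner_smul_right]
  have e2 : ⟪S.ξ k, S.x (k + 1) - S.x k⟫ = -(S.α k * ⟪S.ξ k, w S k⟫) := by
    rw [step_eq, inner_neg_right, real_inner_smul_right]
  rw [e1] at h1
  rw [e2] at h2
  have hsum : S.α k * ⟪S.ξ (k + 1), w S k⟫ - S.α k * ⟪S.ξ k, w S k⟫ ≤ 0 := by linarith
  have hineq : ⟪S.ξ (k + 1), w S k⟫ - ⟪S.ξ k, w S k⟫ ≤ 0 := by nlinarith [hsum, hα]
  have hwv : w S k - v S k = S.ξ (k + 1) - S.ξ k := by simp only [w, v]; abel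
  rw [hwv, inner_sub_left]
  linarith

lemma wlev (S : AdaPBB n) (k : ℕ) : ‖w S k‖ ^ 2 ≤ ‖v S k‖ ^ 2 := by
  have h := sub_mono S k
  rw [inner_sub_left] at h
  have h2 : ⟪v S k, w S k⟫ ≤ ‖v S k‖ * ‖w S k‖ := real_inner_le_norm _ _
  have h3 : ⟪w S k, w S k⟫ = ‖w S k‖ ^ 2 := real_inner_self_eq_norm_sq _
  nlinarith [sq_nonneg (‖v S k‖ - ‖w S k‖), norm_nonneg (w S k), norm_nonneg (v S k)]

lemma Fsub (S : AdaPBB n) (k : ℕ) (y : EuclideanSpace ℝ (Fin n)) :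
    S.F (S.x k) + ⟪v S k, y - S.x k⟫ ≤ S.F y := by
  have h1 := gradient_convex_ineq S.f S.f' S.hfconv S.hgrad y (S.x k)
  have h2 := S.hsub k y
  have h3 : ⟪v S k, y - S.x k⟫ = ⟪S.f' (S.x k), y - S.x k⟫ + ⟪S.ξ k, y - S.x k⟫ := by
    simp only [v]; rw [inner_add_left]
  simp only [AdaPBB.F]
  linarith

lemma L2 (S : AdaPBB n) (xs : EuclideanSpace ℝ (Fin n)) (k : ℕ) :
    ‖S.x (k + 1) - xs‖ ^ 2
      ≤ ‖S.x k - xs‖ ^ 2 - 2 * S.α k * (S.F (S.x k) - S.F xs) + S.α k ^ 2 * ‖v S k‖ ^ 2 := by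
  have hα := (alpha_pos S k).1
  have hx : S.x (k + 1) - xs = (S.x k - xs) - S.α k • w S k := by
    rw [S.hstep k]; simp only [w]; abel
  have hexp : ‖S.x (k + 1) - xs‖ ^ 2
      = ‖S.x k - xs‖ ^ 2 - 2 * (S.α k * ⟪S.x k - xs, w S k⟫) + S.α k ^ 2 * ‖w S k‖ ^ 2 := by
    rw [hx, norm_sub_sq_real, real_inner_smul_right, norm_smul, Real.norm_eq_abs, mul_pow, sq_abs]
    try ring
  have h1 := gradient_convex_ineq S.f S.f' S.hfconv S.hgrad xs (S.x k)
  have h2 := S.hsub (k + 1) xs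
  have h3 := S.hsub k (S.x (k + 1))
  have d5 : ⟪S.ξ k, S.x (k + 1) - S.x k⟫ = -(S.α k * ⟪S.ξ k, w S k⟫) := by
    rw [step_eq, inner_neg_right, real_inner_smul_right]
  rw [d5] at h3
  have hkey : S.F (S.x k) - S.F xs
      + S.α k * (⟪S.ξ (k + 1), w S k⟫ - ⟪S.ξ k, w S k⟫) ≤ ⟪S.x k - xs, w S k⟫ := by
    have d1 : ⟪S.x k - xs, w S k⟫
        = ⟪S.f' (S.x k), S.x k - xs⟫ + ⟪S.ξ (k + 1), S.x k - xs⟫ := by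
      rw [real_inner_comm]; simp only [w]; rw [inner_add_left]
    have d2 : ⟪S.f' (S.x k), S.x k - xs⟫ = -⟪S.f' (S.x k), xs - S.x k⟫ := by
      rw [← inner_neg_right, neg_sub]
    have d3 : ⟪S.ξ (k + 1), S.x k - xs⟫
        = -⟪S.ξ (k + 1), xs - S.x (k + 1)⟫ - ⟪S.ξ (k + 1), S.x (k + 1) - S.x k⟫ := by
      have hdec : S.x k - xs = -(xs - S.x (k + 1)) + -(S.x (k + 1) - S.x k) := by abel
      rw [hdec, inner_add_right, inner_neg_right, inner_neg_right]
      ring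
    have d4 : ⟪S.ξ (k + 1), S.x (k + 1) - S.x k⟫ = -(S.α k * ⟪S.ξ (k + 1), w S k⟫) := by
      rw [step_eq, inner_neg_right, real_inner_smul_right]
    rw [d1, d2, d3, d4]
    simp only [AdaPBB.F]
    linarith
  have hv : ⟪S.ξ (k + 1), w S k⟫ - ⟪S.ξ k, w S k⟫ = ⟪w S k, w S k⟫ - ⟪v S k, w S k⟫ := by
    rw [← inner_sub_left, ← inner_sub_left]
    congr 1
    simp only [w, v]; abel
  have hww : ⟪w S k, w S k⟫ = ‖w S k‖ ^ 2 := real_inner_self_eq_norm_sq _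
  rw [hv, hww] at hkey
  have hvw2 : 2 * ⟪v S k, w S k⟫ - ‖w S k‖ ^ 2 ≤ ‖v S k‖ ^ 2 := by
    nlinarith [real_inner_le_norm (v S k) (w S k), sq_nonneg (‖v S k‖ - ‖w S k‖)]
  have m1 := mul_le_mul_of_nonneg_left hkey (by positivity : (0:ℝ) ≤ 2 * S.α k)
  have m2 := mul_le_mul_of_nonneg_left hvw2 (sq_nonneg (S.α k))
  nlinarith [hexp, m1, m2]

lemma L7 (S : AdaPBB n) (xs : EuclideanSpace ℝ (Fin n)) (k : ℕ) :
    S.α k * ‖w S k‖ ^ 2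
      ≤ (S.F (S.x k) - S.F xs) - (S.F (S.x (k + 1)) - S.F xs)
        + S.lam (k + 1) * ‖dl S k‖ ^ 2 := by
  have h := Fsub S (k + 1) (S.x k)
  have h1 : ⟪v S (k + 1), S.x k - S.x (k + 1)⟫ = S.α k * ⟪v S (k + 1), w S k⟫ := by
    rw [step_eq', real_inner_smul_right]
  have h2 : ⟪v S (k + 1), w S k⟫ = ⟪w S k, w S k⟫ + ⟪dl S k, w S k⟫ := by
    rw [v_succ, inner_add_left]
  have h2' : S.α k * ⟪v S (k + 1), w S k⟫
      = S.α k * ⟪w S k, w S k⟫ + S.α k * ⟪dl S k, w S k⟫ := by rw [h2]; ring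
  have h3 := lam_id S k
  have hww : ⟪w S k, w S k⟫ = ‖w S k‖ ^ 2 := real_inner_self_eq_norm_sq _
  rw [h1] at h
  have hww' : S.α k * ⟪w S k, w S k⟫ = S.α k * ‖w S k‖ ^ 2 := by rw [hww]
  linarith [h, h2', h3, hww']

lemma L8 (S : AdaPBB n) (xs : EuclideanSpace ℝ (Fin n)) (k : ℕ) (h : S.α k ≤ S.lam (k + 1)) :
    S.α k * ‖v S (k + 1)‖ ^ 2 + (S.F (S.x (k + 1)) - S.F xs) ≤ S.F (S.x k) - S.F xs := by
  have h4 := L4 S k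
  have h7 := L7 S xs k
  have hd : (0:ℝ) ≤ ‖dl S k‖ ^ 2 := sq_nonneg _
  nlinarith [h4, h7, mul_nonneg (sub_nonneg.mpr h) hd]

lemma L9a (S : AdaPBB n) (k : ℕ) (h : S.α k / 2 < S.lam (k + 1)) :
    ‖v S (k + 1)‖ ^ 2 ≤ ‖w S k‖ ^ 2 := by
  have h4 := L4 S k
  have hα := (alpha_pos S k).1
  have hm : (0:ℝ) ≤ (2 * S.lam (k + 1) - S.α k) * ‖dl S k‖ ^ 2 :=
    mul_nonneg (by linarith) (sq_nonneg _)
  nlinarith [h4, hm, hα]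

lemma L9b (S : AdaPBB n) (k : ℕ) (h : S.lam (k + 1) ≤ S.α k / 2) :
    S.lam (k + 1) ^ 2 * ‖v S (k + 1)‖ ^ 2 ≤ (S.α k - S.lam (k + 1)) ^ 2 * ‖w S k‖ ^ 2 := by
  have h4 := L4 S k
  have h5 := L5 S k
  have hα := (alpha_pos S k).1
  have hlam1 := S.hlampos k
  have h5sq : S.lam (k + 1) ^ 2 * ‖dl S k‖ ^ 2 ≤ S.α k ^ 2 * ‖w S k‖ ^ 2 := by
    have := mul_self_le_mul_self (mul_nonneg hlam1.le (norm_nonneg (dl S k))) h5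
    nlinarith [this]
  have e1 : S.lam (k + 1) ^ 2 * (S.α k * ‖v S (k + 1)‖ ^ 2)
      = S.lam (k + 1) ^ 2 * (S.α k * ‖w S k‖ ^ 2)
        + (S.α k - 2 * S.lam (k + 1)) * (S.lam (k + 1) ^ 2 * ‖dl S k‖ ^ 2) := by
    rw [h4]; ring
  have hge : (0:ℝ) ≤ S.α k - 2 * S.lam (k + 1) := by linarith
  have e2 := mul_le_mul_of_nonneg_left h5sq hge
  have e3 : S.α k * (S.lam (k + 1) ^ 2 * ‖v S (k + 1)‖ ^ 2)
      ≤ S.α k * ((S.α k - S.lam (k + 1)) ^ 2 * ‖w S k‖ ^ 2) := by nlinarith [e1, e2]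
  exact le_of_mul_le_mul_left e3 hα

lemma B_succ (S : AdaPBB n) (k : ℕ) : S.B (k + 1)
    = if S.α k ≤ S.lam (k + 1) then 0
      else if S.α k / 2 < S.lam (k + 1) then 1
      else (S.α k - S.lam (k + 1)) ^ 2 / S.lam (k + 1) ^ 2 := rfl

lemma E_succ (S : AdaPBB n) (k : ℕ) : S.E (k + 1)
    = if S.α k ≤ S.lam (k + 1) then 1 / S.α k else 0 := rfl

lemma U_succ (S : AdaPBB n) (xs : EuclideanSpace ℝ (Fin n)) (k : ℕ) : S.U xs (k + 1)
    = ‖S.x (k + 1) - xs‖ ^ 2 + 2 * S.B (k + 1) * S.α (k + 1) ^ 2 * ‖v S k‖ ^ 2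
      + 2 * S.E (k + 1) * S.α (k + 1) ^ 2 * (S.F (S.x k) - S.F xs) := rfl

lemma B_nonneg (S : AdaPBB n) (k : ℕ) : 0 ≤ S.B (k + 1) := by
  rw [B_succ]
  split_ifs
  · exact le_refl 0
  · norm_num
  · positivity

lemma E_nonneg (S : AdaPBB n) (k : ℕ) : 0 ≤ S.E (k + 1) := by
  rw [E_succ]
  split_ifs with h
  · exact (one_div_pos.mpr (alpha_pos S k).1).le
  · exact le_refl 0

lemma Cv (S : AdaPBB n) (k : ℕ) : 2 * S.B (k + 1) * S.α (k + 1) ^ 2 ≤ S.α k ^ 2 := by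
  have hα := (alpha_pos S k).1
  have hlam1 := S.hlampos k
  rw [B_succ]
  rcases le_or_gt (S.α k) (S.lam (k + 1)) with h | h
  · rw [if_pos h]
    nlinarith [sq_nonneg (S.α k)]
  · rw [if_neg (not_le.mpr h)]
    rcases le_or_gt (S.lam (k + 1)) (S.α k / 2) with h' | h'
    · rw [if_neg (not_lt.mpr h')]
      obtain ⟨ha, _⟩ := S.hcase3 k h'
      rw [ha, div_pow, Real.sq_sqrt (by norm_num : (0:ℝ) ≤ 2)]
      have hlam2 : S.lam (k + 1) ^ 2 ≠ 0 := by positivity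
      rw [show 2 * ((S.α k - S.lam (k + 1)) ^ 2 / S.lam (k + 1) ^ 2) * (S.lam (k + 1) ^ 2 / 2)
          = (S.α k - S.lam (k + 1)) ^ 2 by field_simp]
      nlinarith [hlam1, h]
    · rw [if_pos h']
      obtain ⟨ha, _⟩ := S.hcase2 k h' h
      rw [ha, div_pow, Real.sq_sqrt (by norm_num : (0:ℝ) ≤ 2)]
      nlinarith [sq_nonneg (S.α k)]

lemma Ce (S : AdaPBB n) (k : ℕ) :
    2 * S.E (k + 1) * S.α (k + 1) ^ 2 ≤ 2 * S.α k + 2 * S.θ k * S.α k := by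
  have hα := (alpha_pos S k).1
  have hθ := (alpha_pos S k).2
  have hne := hα.ne'
  rw [E_succ]
  rcases le_or_gt (S.α k) (S.lam (k + 1)) with h | h
  · rw [if_pos h]
    obtain ⟨ha, _⟩ := S.hcase1 k h
    rw [ha, mul_pow, Real.sq_sqrt (by linarith : (0:ℝ) ≤ 1 + S.θ k)]
    have e : 2 * (1 / S.α k) * ((1 + S.θ k) * S.α k ^ 2) = 2 * S.α k + 2 * S.θ k * S.α k := by
      field_simp
    exact le_of_eq e
  · rw [if_neg (not_le.mpr h)]
    have h0 : 2 * (0:ℝ) * S.α (k + 1) ^ 2 = 0 := by ring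
    rw [h0]
    nlinarith [mul_nonneg hθ hα.le, hα]

lemma Umono (S : AdaPBB n) (xs : EuclideanSpace ℝ (Fin n)) (hxs : ∀ y, S.F xs ≤ S.F y)
    (j : ℕ) : S.U xs (j + 1 + 1) ≤ S.U xs (j + 1) := by
  have hα1 := (alpha_pos S (j + 1)).1
  have hαj := (alpha_pos S j).1
  have hP1 : 0 ≤ S.F (S.x (j + 1)) - S.F xs := sub_nonneg.mpr (hxs _)
  have hPj : 0 ≤ S.F (S.x j) - S.F xs := sub_nonneg.mpr (hxs _)
  have hL2 := L2 S xs (j + 1)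
  have hCv := Cv S (j + 1)
  have hCe := Ce S (j + 1)
  have hv1 : (0:ℝ) ≤ ‖v S (j + 1)‖ ^ 2 := sq_nonneg _
  have hmid := mul_le_mul_of_nonneg_right hCv hv1
  have hE2 := mul_le_mul_of_nonneg_right hCe hP1
  rw [U_succ, U_succ]
  have hstep1 : ‖S.x (j + 1 + 1) - xs‖ ^ 2
      + 2 * S.B (j + 1 + 1) * S.α (j + 1 + 1) ^ 2 * ‖v S (j + 1)‖ ^ 2
      + 2 * S.E (j + 1 + 1) * S.α (j + 1 + 1) ^ 2 * (S.F (S.x (j + 1)) - S.F xs)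
      ≤ ‖S.x (j + 1) - xs‖ ^ 2 + 2 * S.α (j + 1) ^ 2 * ‖v S (j + 1)‖ ^ 2
        + 2 * S.θ (j + 1) * S.α (j + 1) * (S.F (S.x (j + 1)) - S.F xs) := by
    nlinarith [hL2, hmid, hE2]
  refine le_trans hstep1 ?_
  rw [B_succ S j, E_succ S j]
  rcases le_or_gt (S.α j) (S.lam (j + 1)) with h | h
  · obtain ⟨_, hθ⟩ := S.hcase1 j h
    rw [if_pos h, if_pos h, hθ]
    have h8 := L8 S xs j h
    have key : 2 * S.α (j + 1) ^ 2 * ‖v S (j + 1)‖ ^ 2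
        + 2 * (S.α (j + 1) / S.α j) * S.α (j + 1) * (S.F (S.x (j + 1)) - S.F xs)
        ≤ 2 * (1 / S.α j) * S.α (j + 1) ^ 2 * (S.F (S.x j) - S.F xs) := by
      have hc : (0:ℝ) ≤ 2 * S.α (j + 1) ^ 2 / S.α j := div_nonneg (by positivity) hαj.le
      have hm := mul_le_mul_of_nonneg_left h8 hc
      have e1 : 2 * S.α (j + 1) ^ 2 / S.α j
            * (S.α j * ‖v S (j + 1)‖ ^ 2 + (S.F (S.x (j + 1)) - S.F xs))
          = 2 * S.α (j + 1) ^ 2 * ‖v S (j + 1)‖ ^ 2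
            + 2 * (S.α (j + 1) / S.α j) * S.α (j + 1) * (S.F (S.x (j + 1)) - S.F xs) := by
        field_simp
      have e2 : 2 * S.α (j + 1) ^ 2 / S.α j * (S.F (S.x j) - S.F xs)
          = 2 * (1 / S.α j) * S.α (j + 1) ^ 2 * (S.F (S.x j) - S.F xs) := by ring
      linarith [hm, e1.le, e1.ge, e2.le, e2.ge]
    linarith [key]
  · rw [if_neg (not_le.mpr h), if_neg (not_le.mpr h)]
    have hwv := wlev S j
    rcases le_or_gt (S.lam (j + 1)) (S.α j / 2) with h' | h'
    · obtain ⟨_, hθ⟩ := S.hcase3 j h'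
      rw [if_neg (not_lt.mpr h'), hθ]
      have h9 := L9b S j h'
      have hlam1 := S.hlampos j
      have key : ‖v S (j + 1)‖ ^ 2
          ≤ (S.α j - S.lam (j + 1)) ^ 2 / S.lam (j + 1) ^ 2 * ‖v S j‖ ^ 2 := by
        rw [div_mul_eq_mul_div, le_div_iff₀ (by positivity : (0:ℝ) < S.lam (j + 1) ^ 2)]
        nlinarith [h9, mul_le_mul_of_nonneg_left hwv (sq_nonneg (S.α j - S.lam (j + 1)))]
      have hm := mul_le_mul_of_nonneg_left key
        (show (0:ℝ) ≤ 2 * S.α (j + 1) ^ 2 by positivity)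
      have e : 2 * S.α (j + 1) ^ 2 * ((S.α j - S.lam (j + 1)) ^ 2 / S.lam (j + 1) ^ 2 * ‖v S j‖ ^ 2)
          = 2 * ((S.α j - S.lam (j + 1)) ^ 2 / S.lam (j + 1) ^ 2) * S.α (j + 1) ^ 2 * ‖v S j‖ ^ 2 := by
        ring
      linarith [hm, e.le, e.ge, hP1]
    · obtain ⟨_, hθ⟩ := S.hcase2 j h' h
      rw [if_pos h', hθ]
      have h9 := L9a S j h'
      have hm := mul_le_mul_of_nonneg_left (le_trans h9 hwv)
        (show (0:ℝ) ≤ 2 * S.α (j + 1) ^ 2 by positivity)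
      linarith [hm, hP1]

lemma Ubase (S : AdaPBB n) (xs : EuclideanSpace ℝ (Fin n)) (hxs : ∀ y, S.F xs ≤ S.F y) :
    S.U xs (0 + 1) ≤ ‖S.x 0 - xs‖ ^ 2 + 2 * S.α 0 ^ 2 * ‖S.f' (S.x 0) + S.ξ 0‖ ^ 2
      + max (2 * (S.E 1 * S.α 1 ^ 2 - S.α 0)) 0 * (S.F (S.x 0) - S.F xs) := by
  rw [U_succ]
  have hL2 := L2 S xs 0
  have hCv := Cv S 0
  have hv0 : (0:ℝ) ≤ ‖v S 0‖ ^ 2 := sq_nonneg _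
  have hmid := mul_le_mul_of_nonneg_right hCv hv0
  have hP0 : 0 ≤ S.F (S.x 0) - S.F xs := sub_nonneg.mpr (hxs _)
  have hmax : 2 * (S.E (0 + 1) * S.α (0 + 1) ^ 2 - S.α 0)
      ≤ max (2 * (S.E 1 * S.α 1 ^ 2 - S.α 0)) 0 := le_max_left _ _
  have hEterm := mul_le_mul_of_nonneg_right hmax hP0
  have hveq : ‖v S 0‖ ^ 2 = ‖S.f' (S.x 0) + S.ξ 0‖ ^ 2 := rfl
  nlinarith [hL2, hmid, hEterm, hveq.le, hveq.ge]

lemma AleU (S : AdaPBB n) (xs : EuclideanSpace ℝ (Fin n)) (hxs : ∀ y, S.F xs ≤ S.F y)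
    (k : ℕ) : ‖S.x (k + 1) - xs‖ ^ 2 ≤ S.U xs (k + 1) := by
  rw [U_succ]
  have hB := B_nonneg S k
  have hE := E_nonneg S k
  have hP : 0 ≤ S.F (S.x k) - S.F xs := sub_nonneg.mpr (hxs _)
  have m1 : (0:ℝ) ≤ 2 * S.B (k + 1) * S.α (k + 1) ^ 2 * ‖v S k‖ ^ 2 :=
    mul_nonneg (mul_nonneg (mul_nonneg (by norm_num) hB) (sq_nonneg _)) (sq_nonneg _)
  have m2 : (0:ℝ) ≤ 2 * S.E (k + 1) * S.α (k + 1) ^ 2 * (S.F (S.x k) - S.F xs) :=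
    mul_nonneg (mul_nonneg (mul_nonneg (by norm_num) hE) (sq_nonneg _)) hP
  linarith

end AdaPBBProof

/-- Corollary 5.10: the sequence `{x^k}` generated by the AdaPBB iteration is bounded:
`‖x^k - x*‖ ≤ T` for all `k ≥ 0`, where
`T² = ‖x^0 - x*‖² + 2α_0²‖∇f(x^0) + ξ^0‖² + max{2(E_1α_1² - α_0), 0}·(F(x^0) - F_*)`. -/
theorem adapbb_bounded (n : ℕ) (S : AdaPBB n)
    (xs : EuclideanSpace ℝ (Fin n)) (hxs : ∀ y, S.F xs ≤ S.F y)
    (T : ℝ) (hT0 : 0 ≤ T)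
    (hT2 : T ^ 2 = ‖S.x 0 - xs‖ ^ 2 + 2 * S.α 0 ^ 2 * ‖S.f' (S.x 0) + S.ξ 0‖ ^ 2 +
      max (2 * (S.E 1 * S.α 1 ^ 2 - S.α 0)) 0 * (S.F (S.x 0) - S.F xs)) :
    ∀ k, ‖S.x k - xs‖ ≤ T := by
  have key : ∀ m, ‖S.x m - xs‖ ^ 2 ≤ T ^ 2 := by
    intro m
    have hmax0 : (0:ℝ) ≤ max (2 * (S.E 1 * S.α 1 ^ 2 - S.α 0)) 0 := le_max_right _ _
    have hP0 : 0 ≤ S.F (S.x 0) - S.F xs := sub_nonneg.mpr (hxs _)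
    cases m with
    | zero =>
      rw [hT2]
      have m1 : (0:ℝ) ≤ 2 * S.α 0 ^ 2 * ‖S.f' (S.x 0) + S.ξ 0‖ ^ 2 := by positivity
      have m2 : (0:ℝ) ≤ max (2 * (S.E 1 * S.α 1 ^ 2 - S.α 0)) 0 * (S.F (S.x 0) - S.F xs) :=
        mul_nonneg hmax0 hP0
      linarith
    | succ m =>
      have hUle : S.U xs (m + 1) ≤ S.U xs (0 + 1) := by
        induction m with
        | zero => exact le_rfl
        | succ m ih => exact le_trans (AdaPBBProof.Umono S xs hxs m) ih
      have hU1 : S.U xs (0 + 1) ≤ T ^ 2 := by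
        rw [hT2]
        exact AdaPBBProof.Ubase S xs hxs
      have hA := AdaPBBProof.AleU S xs hxs m
      linarith
  intro k
  have h := key k
  rw [← Real.sqrt_sq (norm_nonneg (S.x k - xs)), ← Real.sqrt_sq hT0]
  exact Real.sqrt_le_sqrt h
end

section
/- Ergodic convergence of AdaPBB: define w_k = α_k + E_kα_k² − E_{k+1}α_{k+1}² for k ≥ 1, S_k = E_1α_1² + Σ_{i=1}^k α_i, and x̄^k = (α_k(1 + E_kα_k)·x^k + Σ_{i=1}^{k−1} w_i·x^i)/S_k. Then for every k ≥ 1, F(x̄^k) − F_* ≤ U_1/(2S_k). -/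
open scoped RealInnerProductSpace
open Finset Filter

noncomputable section
open Topology

lemma convex_gradient_ineq {E : Type*} [NormedAddCommGroup E] [InnerProductSpace ℝ E] [CompleteSpace E]
    {f : E → ℝ} (hf : ConvexOn ℝ Set.univ f) {x y gx : E}
    (hx : HasGradientAt f gx x) : f x + ⟪gx, y - x⟫ ≤ f y := by
  set v := y - x with hv
  have hline : HasDerivAt (fun t : ℝ => x + t • v) v 0 := by
    have h1 : HasDerivAt (fun t : ℝ => t • v) ((1 : ℝ) • v) 0 :=
      (hasDerivAt_id (0 : ℝ)).smul_const v
    simpa using h1.const_add x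
  have hfd : HasFDerivAt f (InnerProductSpace.toDual ℝ E gx) x :=
    hasGradientAt_iff_hasFDerivAt.mp hx
  have hφ : HasDerivAt (fun t : ℝ => f (x + t • v)) ⟪gx, v⟫ 0 := by
    have hfd' : HasFDerivAt f (InnerProductSpace.toDual ℝ E gx) (x + (0:ℝ) • v) := by
      simpa using hfd
    have := hfd'.comp_hasDerivAt (x := (0:ℝ)) hline
    simpa [InnerProductSpace.toDual_apply_apply, Function.comp_def] using this
  have hslope : Tendsto (slope (fun t : ℝ => f (x + t • v)) 0) (𝓝[>] (0:ℝ)) (𝓝 ⟪gx, v⟫) :=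
    (hasDerivAt_iff_tendsto_slope.mp hφ).mono_left
      (nhdsWithin_mono 0 (fun t ht => ne_of_gt ht))
  have hbound : ∀ᶠ t in 𝓝[>] (0:ℝ), slope (fun t : ℝ => f (x + t • v)) 0 t ≤ f y - f x := by
    filter_upwards [Ioc_mem_nhdsGT_of_mem (by norm_num : (0:ℝ) ∈ Set.Ico (0:ℝ) 1)]
      with t ht
    have ht0 : 0 < t := ht.1
    have ht1 : t ≤ 1 := ht.2
    have hxy : x + t • v = (1 - t) • x + t • y := by
      rw [hv]; module
    have hcv : f (x + t • v) ≤ (1 - t) * f x + t * f y := by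
      rw [hxy]
      exact hf.2 (Set.mem_univ x) (Set.mem_univ y) (by linarith) (le_of_lt ht0) (by ring)
    rw [slope_def_field]
    have : (f (x + t • v) - f (x + (0:ℝ) • v)) / (t - 0) ≤ f y - f x := by
      rw [div_le_iff₀ (by linarith)]
      simp only [zero_smul, add_zero]
      nlinarith
    simpa [slope, div_eq_inv_mul] using this
  have := le_of_tendsto hslope hbound
  linarith

namespace AdaPBB

variable {n : ℕ}

/-- the subgradient of `F` at `x j` -/
def Pvec (S : AdaPBB n) (j : ℕ) : EuclideanSpace ℝ (Fin n) := S.f' (S.x j) + S.ξ j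

lemma pos (S : AdaPBB n) : ∀ k, 0 < S.α k ∧ 0 ≤ S.θ k := by
  intro k
  induction k with
  | zero => exact ⟨S.hα0, S.hθ0⟩
  | succ m ih =>
    rcases le_or_gt (S.α m) (S.lam (m+1)) with h1 | h1
    · obtain ⟨ha, hθ⟩ := S.hcase1 m h1
      have h1θ : (0:ℝ) < 1 + S.θ m := by linarith [ih.2]
      have hs : 0 < Real.sqrt (1 + S.θ m) := Real.sqrt_pos.mpr h1θ
      have hα : 0 < S.α (m+1) := by rw [ha]; exact mul_pos hs ih.1
      exact ⟨hα, by rw [hθ]; exact div_nonneg hα.le ih.1.le⟩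
    · rcases le_or_gt (S.lam (m+1)) (S.α m / 2) with h3 | h2
      · obtain ⟨ha, hθ⟩ := S.hcase3 m h3
        exact ⟨by rw [ha]; exact div_pos (S.hlampos m) (by positivity), by rw [hθ]⟩
      · obtain ⟨ha, hθ⟩ := S.hcase2 m h2 h1
        exact ⟨by rw [ha]; exact div_pos ih.1 (by positivity), by rw [hθ]⟩

lemma B_succ (S : AdaPBB n) (m : ℕ) : S.B (m+1) =
    if S.α m ≤ S.lam (m+1) then 0
    else if S.α m / 2 < S.lam (m+1) then 1
    else (S.α m - S.lam (m+1)) ^ 2 / S.lam (m+1) ^ 2 := by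
  simp [B]

lemma E_succ (S : AdaPBB n) (m : ℕ) : S.E (m+1) =
    if S.α m ≤ S.lam (m+1) then 1 / S.α m else 0 := by
  simp [E, Eaux]

lemma B_succ_nonneg (S : AdaPBB n) (m : ℕ) : 0 ≤ S.B (m+1) := by
  rw [B_succ]; split_ifs <;> positivity

lemma E_succ_nonneg (S : AdaPBB n) (m : ℕ) : 0 ≤ S.E (m+1) := by
  rw [E_succ]; split_ifs
  · exact one_div_nonneg.mpr (S.pos m).1.le
  · exact le_rfl


lemma dir_eq (S : AdaPBB n) (m : ℕ) : S.f' (S.x m) + S.ξ (m+1) =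
    S.Pvec (m+1) - (S.f' (S.x (m+1)) - S.f' (S.x m)) := by
  unfold Pvec; abel

lemma step_vec (S : AdaPBB n) (m : ℕ) : S.x (m+1) - S.x m =
    -(S.α m • (S.Pvec (m+1) - (S.f' (S.x (m+1)) - S.f' (S.x m)))) := by
  have h : S.x (m+1) - S.x m = -(S.α m • (S.f' (S.x m) + S.ξ (m+1))) := by
    rw [S.hstep m]; abel
  rw [S.dir_eq m] at h
  exact h

lemma fb (S : AdaPBB n) (m : ℕ) :
    S.α m * ⟪S.f' (S.x (m+1)) - S.f' (S.x m), S.Pvec (m+1)⟫ =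
      (S.α m - S.lam (m+1)) * ‖S.f' (S.x (m+1)) - S.f' (S.x m)‖ ^ 2 := by
  set Δ := S.f' (S.x (m+1)) - S.f' (S.x m) with hΔdef
  have hΔ : Δ ≠ 0 := sub_ne_zero_of_ne (S.hne m)
  have hD : ‖Δ‖ ^ 2 ≠ 0 := pow_ne_zero _ (norm_ne_zero_iff.mpr hΔ)
  have h1 : ⟪Δ, S.x (m+1) - S.x m⟫ = S.lam (m+1) * ‖Δ‖ ^ 2 := by
    rw [S.hlam m, div_mul_cancel₀ _ hD]
  rw [S.step_vec m] at h1
  rw [inner_neg_right, real_inner_smul_right, inner_sub_right,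
    real_inner_self_eq_norm_sq] at h1
  linear_combination -h1

lemma fc (S : AdaPBB n) (m : ℕ) :
    S.α m * ‖S.Pvec (m+1)‖ ^ 2
      - (S.α m - S.lam (m+1)) * ‖S.f' (S.x (m+1)) - S.f' (S.x m)‖ ^ 2 ≤
      S.F (S.x m) - S.F (S.x (m+1)) := by
  set Δ := S.f' (S.x (m+1)) - S.f' (S.x m) with hΔdef
  have hgi : S.f (S.x (m+1)) + ⟪S.f' (S.x (m+1)), S.x m - S.x (m+1)⟫ ≤ S.f (S.x m) :=
    convex_gradient_ineq S.hfconv (S.hgrad (S.x (m+1)))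
  have hsg : S.g (S.x (m+1)) + ⟪S.ξ (m+1), S.x m - S.x (m+1)⟫ ≤ S.g (S.x m) :=
    S.hsub (m+1) (S.x m)
  have hsum : S.F (S.x (m+1)) + ⟪S.Pvec (m+1), S.x m - S.x (m+1)⟫ ≤ S.F (S.x m) := by
    unfold F Pvec
    rw [inner_add_left]
    linarith
  have hx : S.x m - S.x (m+1) = S.α m • (S.Pvec (m+1) - Δ) := by
    have h := S.step_vec m
    rw [← hΔdef] at h
    have h' : S.x m - S.x (m+1) = -(S.x (m+1) - S.x m) := by abel
    rw [h', h]; abel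
  rw [hx, real_inner_smul_right, inner_sub_right, real_inner_self_eq_norm_sq,
    real_inner_comm] at hsum
  have hfb := S.fb m
  nlinarith [hsum, hfb]

lemma fe (S : AdaPBB n) (m : ℕ) :
    S.α m * (‖S.Pvec (m+1)‖ ^ 2 - ‖S.Pvec m‖ ^ 2) ≤
      (S.α m - 2 * S.lam (m+1)) * ‖S.f' (S.x (m+1)) - S.f' (S.x m)‖ ^ 2 := by
  set Δ := S.f' (S.x (m+1)) - S.f' (S.x m) with hΔdef
  have ha := (S.pos m).1
  have h4 : S.g (S.x m) + ⟪S.ξ m, S.x (m+1) - S.x m⟫ ≤ S.g (S.x (m+1)) :=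
    S.hsub m (S.x (m+1))
  have h5 : S.g (S.x (m+1)) + ⟪S.ξ (m+1), S.x m - S.x (m+1)⟫ ≤ S.g (S.x m) :=
    S.hsub (m+1) (S.x m)
  have h5' : ⟪S.ξ (m+1), S.x m - S.x (m+1)⟫ = -⟪S.ξ (m+1), S.x (m+1) - S.x m⟫ := by
    rw [← inner_neg_right]; congr 1; abel
  have h6 : 0 ≤ ⟪S.ξ (m+1) - S.ξ m, S.x (m+1) - S.x m⟫ := by
    rw [inner_sub_left]; linarith
  have hξ : S.ξ (m+1) - S.ξ m = S.Pvec (m+1) - S.Pvec m - Δ := by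
    unfold Pvec; rw [hΔdef]; abel
  rw [hξ, S.step_vec m, inner_neg_right, real_inner_smul_right] at h6
  have h7 : ⟪S.Pvec (m+1) - S.Pvec m - Δ, S.Pvec (m+1) - Δ⟫ ≤ 0 := by
    nlinarith [h6, ha]
  have h8 : (0:ℝ) ≤ ‖S.Pvec m - (S.Pvec (m+1) - Δ)‖ ^ 2 := sq_nonneg _
  have e7 : ⟪S.Pvec (m+1) - S.Pvec m - Δ, S.Pvec (m+1) - Δ⟫ =
      ‖S.Pvec (m+1)‖ ^ 2 - 2 * ⟪Δ, S.Pvec (m+1)⟫ - ⟪S.Pvec m, S.Pvec (m+1)⟫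
        + ⟪S.Pvec m, Δ⟫ + ‖Δ‖ ^ 2 := by
    simp only [inner_sub_left, inner_sub_right, real_inner_self_eq_norm_sq]
    rw [real_inner_comm (S.Pvec (m+1)) Δ]
    ring
  have e8 : ‖S.Pvec m - (S.Pvec (m+1) - Δ)‖ ^ 2 =
      ‖S.Pvec m‖ ^ 2 - 2 * ⟪S.Pvec m, S.Pvec (m+1)⟫ + 2 * ⟪S.Pvec m, Δ⟫
        + ‖S.Pvec (m+1)‖ ^ 2 - 2 * ⟪Δ, S.Pvec (m+1)⟫ + ‖Δ‖ ^ 2 := by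
    rw [norm_sub_sq_real, norm_sub_sq_real, inner_sub_right]
    rw [real_inner_comm (S.Pvec (m+1)) Δ]
    ring
  rw [e7] at h7
  rw [e8] at h8
  have h9 : ‖S.Pvec (m+1)‖ ^ 2 ≤ ‖S.Pvec m‖ ^ 2 + 2 * ⟪Δ, S.Pvec (m+1)⟫ - ‖Δ‖ ^ 2 := by
    linarith
  have hfb := S.fb m
  nlinarith [mul_le_mul_of_nonneg_left h9 ha.le, hfb]


lemma keyN (S : AdaPBB n) (m : ℕ) :
    ‖S.Pvec (m+1)‖ ^ 2 + S.E (m+1) * (S.F (S.x (m+1)) - S.F (S.x m)) ≤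
      S.B (m+1) * ‖S.Pvec m‖ ^ 2 := by
  have ha := (S.pos m).1
  have hfc := S.fc m
  have hfe := S.fe m
  have hfb := S.fb m
  have hD : 0 < ‖S.f' (S.x (m+1)) - S.f' (S.x m)‖ :=
    norm_pos_iff.mpr (sub_ne_zero_of_ne (S.hne m))
  rcases le_or_gt (S.α m) (S.lam (m+1)) with h1 | h1
  · have hB : S.B (m+1) = 0 := by rw [B_succ]; simp [h1]
    have hE : S.E (m+1) = 1 / S.α m := by rw [E_succ]; simp [h1]
    rw [hB, hE, zero_mul]
    have key : S.α m * ‖S.Pvec (m+1)‖ ^ 2 + (S.F (S.x (m+1)) - S.F (S.x m)) ≤ 0 := by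
      nlinarith [sq_nonneg ‖S.f' (S.x (m+1)) - S.f' (S.x m)‖]
    have heq : ‖S.Pvec (m+1)‖ ^ 2 + 1 / S.α m * (S.F (S.x (m+1)) - S.F (S.x m)) =
        (S.α m * ‖S.Pvec (m+1)‖ ^ 2 + (S.F (S.x (m+1)) - S.F (S.x m))) / S.α m := by
      field_simp
    rw [heq]
    exact div_nonpos_of_nonpos_of_nonneg key ha.le
  · have hE : S.E (m+1) = 0 := by rw [E_succ]; simp [not_le.mpr h1]
    rcases le_or_gt (S.lam (m+1)) (S.α m / 2) with h3 | h2
    · have hB : S.B (m+1) = (S.α m - S.lam (m+1)) ^ 2 / S.lam (m+1) ^ 2 := by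
        rw [B_succ, if_neg (not_le.mpr h1), if_neg (not_lt.mpr h3)]
      rw [hB, hE, zero_mul, add_zero]
      have hlp := S.hlampos m
      have hip : ⟪S.f' (S.x (m+1)) - S.f' (S.x m), S.Pvec (m+1)⟫ ≤
          ‖S.f' (S.x (m+1)) - S.f' (S.x m)‖ * ‖S.Pvec (m+1)‖ := real_inner_le_norm _ _
      have hCD : (S.α m - S.lam (m+1)) * ‖S.f' (S.x (m+1)) - S.f' (S.x m)‖ ≤
          S.α m * ‖S.Pvec (m+1)‖ := by
        have h' : (S.α m - S.lam (m+1)) * ‖S.f' (S.x (m+1)) - S.f' (S.x m)‖ *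
            ‖S.f' (S.x (m+1)) - S.f' (S.x m)‖ ≤ S.α m * ‖S.Pvec (m+1)‖ *
            ‖S.f' (S.x (m+1)) - S.f' (S.x m)‖ := by
          nlinarith [hip, ha]
        exact le_of_mul_le_mul_right h' hD
      have hD2 : (S.α m - S.lam (m+1)) ^ 2 * ‖S.f' (S.x (m+1)) - S.f' (S.x m)‖ ^ 2 ≤
          S.α m ^ 2 * ‖S.Pvec (m+1)‖ ^ 2 := by
        have hL : 0 ≤ (S.α m - S.lam (m+1)) * ‖S.f' (S.x (m+1)) - S.f' (S.x m)‖ :=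
          mul_nonneg (by linarith) (norm_nonneg _)
        nlinarith [mul_self_le_mul_self hL hCD]
      have hmain : S.lam (m+1) ^ 2 * ‖S.Pvec (m+1)‖ ^ 2 ≤
          (S.α m - S.lam (m+1)) ^ 2 * ‖S.Pvec m‖ ^ 2 := by
        have h1' := mul_le_mul_of_nonneg_left hfe (sq_nonneg (S.α m - S.lam (m+1)))
        have h2' := mul_le_mul_of_nonneg_left hD2
          (by linarith : (0:ℝ) ≤ S.α m - 2 * S.lam (m+1))
        have h3' : S.α m * (S.lam (m+1) ^ 2 * ‖S.Pvec (m+1)‖ ^ 2) ≤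
            S.α m * ((S.α m - S.lam (m+1)) ^ 2 * ‖S.Pvec m‖ ^ 2) := by
          nlinarith [h1', h2']
        exact le_of_mul_le_mul_left h3' ha
      rw [div_mul_eq_mul_div, le_div_iff₀ (by positivity : (0:ℝ) < S.lam (m+1) ^ 2)]
      nlinarith [hmain]
    · have hB : S.B (m+1) = 1 := by rw [B_succ, if_neg (not_le.mpr h1), if_pos h2]
      rw [hB, hE, zero_mul, add_zero, one_mul]
      nlinarith [hfe, sq_nonneg ‖S.f' (S.x (m+1)) - S.f' (S.x m)‖, ha]

lemma Bbound (S : AdaPBB n) (m : ℕ) : 2 * S.B (m+2) * S.α (m+2) ^ 2 ≤ S.α (m+1) ^ 2 := by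
  have ha1 := (S.pos (m+1)).1
  have hs2 : (Real.sqrt 2) ^ 2 = 2 := Real.sq_sqrt (by norm_num)
  have hs2pos : (0:ℝ) < Real.sqrt 2 := by positivity
  rcases le_or_gt (S.α (m+1)) (S.lam (m+2)) with h1 | h1
  · have hB : S.B (m+2) = 0 := by rw [show m+2 = (m+1)+1 from rfl, B_succ]; simp [h1]
    rw [hB]
    nlinarith [sq_nonneg (S.α (m+2)), sq_nonneg (S.α (m+1))]
  · rcases le_or_gt (S.lam (m+2)) (S.α (m+1) / 2) with h3 | h2
    · have hB : S.B (m+2) = (S.α (m+1) - S.lam (m+2)) ^ 2 / S.lam (m+2) ^ 2 := by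
        rw [show m+2 = (m+1)+1 from rfl, B_succ, if_neg (not_le.mpr h1),
          if_neg (not_lt.mpr h3)]
      have ha2 : S.α (m+2) = S.lam (m+2) / Real.sqrt 2 := (S.hcase3 (m+1) h3).1
      have hlp := S.hlampos (m+1)
      rw [hB, ha2, div_pow, hs2]
      have heq : 2 * ((S.α (m+1) - S.lam (m+2)) ^ 2 / S.lam (m+2) ^ 2) *
          (S.lam (m+2) ^ 2 / 2) = (S.α (m+1) - S.lam (m+2)) ^ 2 := by
        field_simp
      rw [heq]
      nlinarith [h3, hlp]
    · have hB : S.B (m+2) = 1 := by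
        rw [show m+2 = (m+1)+1 from rfl, B_succ, if_neg (not_le.mpr h1), if_pos h2]
      have ha2 : S.α (m+2) = S.α (m+1) / Real.sqrt 2 := (S.hcase2 (m+1) h2 h1).1
      rw [hB, ha2, div_pow, hs2]
      have heq : 2 * 1 * (S.α (m+1) ^ 2 / 2) = S.α (m+1) ^ 2 := by ring
      rw [heq]

lemma diamond (S : AdaPBB n) (xs : EuclideanSpace ℝ (Fin n)) (m : ℕ) :
    ‖S.x (m+1) - xs‖ ^ 2 + 2 * S.α m * (S.F (S.x m) - S.F xs) ≤
      ‖S.x m - xs‖ ^ 2 + S.α m ^ 2 * ‖S.Pvec m‖ ^ 2 := by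
  have ha := (S.pos m).1
  have hx1 : S.x (m+1) - xs = (S.x m - xs) - S.α m • (S.f' (S.x m) + S.ξ (m+1)) := by
    rw [S.hstep m]; abel
  have hexp : ‖S.x (m+1) - xs‖ ^ 2 = ‖S.x m - xs‖ ^ 2
      - 2 * (S.α m * ⟪S.x m - xs, S.f' (S.x m) + S.ξ (m+1)⟫)
      + S.α m ^ 2 * ‖S.f' (S.x m) + S.ξ (m+1)‖ ^ 2 := by
    rw [hx1, norm_sub_sq_real, real_inner_smul_right, norm_smul]
    rw [mul_pow, Real.norm_eq_abs, sq_abs]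
    try ring
  have h1 : S.f (S.x m) + ⟪S.f' (S.x m), xs - S.x m⟫ ≤ S.f xs :=
    convex_gradient_ineq S.hfconv (S.hgrad (S.x m))
  have h2 : S.g (S.x (m+1)) + ⟪S.ξ (m+1), xs - S.x (m+1)⟫ ≤ S.g xs := S.hsub (m+1) xs
  have h3 : S.g (S.x m) + ⟪S.ξ m, S.x (m+1) - S.x m⟫ ≤ S.g (S.x (m+1)) :=
    S.hsub m (S.x (m+1))
  have e1 : ⟪S.x m - xs, S.f' (S.x m) + S.ξ (m+1)⟫
      = ⟪S.f' (S.x m), S.x m - xs⟫ + ⟪S.ξ (m+1), S.x m - xs⟫ := by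
    rw [real_inner_comm, inner_add_left]
  have e2 : ⟪S.f' (S.x m), xs - S.x m⟫ = -⟪S.f' (S.x m), S.x m - xs⟫ := by
    rw [← inner_neg_right]; congr 1; abel
  have e3 : ⟪S.ξ (m+1), S.x m - xs⟫ = ⟪S.ξ (m+1), S.x (m+1) - xs⟫
      + S.α m * ⟪S.ξ (m+1), S.f' (S.x m) + S.ξ (m+1)⟫ := by
    rw [← real_inner_smul_right, ← inner_add_right]
    congr 1
    rw [S.hstep m]; abel
  have e4 : ⟪S.ξ (m+1), xs - S.x (m+1)⟫ = -⟪S.ξ (m+1), S.x (m+1) - xs⟫ := by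
    rw [← inner_neg_right]; congr 1; abel
  have e5 : ⟪S.ξ m, S.x (m+1) - S.x m⟫
      = -(S.α m * ⟪S.ξ m, S.f' (S.x m) + S.ξ (m+1)⟫) := by
    rw [← real_inner_smul_right, ← inner_neg_right]
    congr 1
    rw [S.hstep m]; abel
  have hlow : S.F (S.x m) - S.F xs
      + S.α m * ⟪S.ξ (m+1) - S.ξ m, S.f' (S.x m) + S.ξ (m+1)⟫
      ≤ ⟪S.x m - xs, S.f' (S.x m) + S.ξ (m+1)⟫ := by
    rw [e1, e3, inner_sub_left]
    unfold F
    rw [e2] at h1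
    rw [e4] at h2
    rw [e5] at h3
    linarith
  have hPvec : S.f' (S.x m) + S.ξ (m+1) - (S.ξ (m+1) - S.ξ m) = S.Pvec m := by
    unfold Pvec; abel
  have hGδ : ‖S.Pvec m‖ ^ 2 = ‖S.f' (S.x m) + S.ξ (m+1)‖ ^ 2
      - 2 * ⟪S.f' (S.x m) + S.ξ (m+1), S.ξ (m+1) - S.ξ m⟫
      + ‖S.ξ (m+1) - S.ξ m‖ ^ 2 := by
    rw [← hPvec, norm_sub_sq_real]
  have hcomm : ⟪S.f' (S.x m) + S.ξ (m+1), S.ξ (m+1) - S.ξ m⟫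
      = ⟪S.ξ (m+1) - S.ξ m, S.f' (S.x m) + S.ξ (m+1)⟫ := real_inner_comm _ _
  have hmul := mul_le_mul_of_nonneg_left hlow (by linarith : (0:ℝ) ≤ 2 * S.α m)
  rw [hexp]
  nlinarith [hmul, sq_nonneg (S.α m * ‖S.ξ (m+1) - S.ξ m‖), hGδ, hcomm]


def w (S : AdaPBB n) (j : ℕ) : ℝ :=
  S.α j + S.E j * S.α j ^ 2 - S.E (j+1) * S.α (j+1) ^ 2

lemma onestep (S : AdaPBB n) (xs : EuclideanSpace ℝ (Fin n)) (m : ℕ) :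
    S.U xs (m+2) + 2 * S.w (m+1) * (S.F (S.x (m+1)) - S.F xs) ≤ S.U xs (m+1) := by
  have hd := S.diamond xs (m+1)
  have hk := mul_le_mul_of_nonneg_left (S.keyN m)
    (by positivity : (0:ℝ) ≤ 2 * S.α (m+1) ^ 2)
  have hb := mul_le_mul_of_nonneg_right (S.Bbound m) (sq_nonneg ‖S.Pvec (m+1)‖)
  unfold U w
  rw [show m+2-1 = m+1 from rfl, show m+1-1 = m from rfl]
  simp only [Pvec] at hd hk hb
  nlinarith [hd, hk, hb]

lemma w_nonneg (S : AdaPBB n) (m : ℕ) : 0 ≤ S.w (m+1) := by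
  unfold w
  have ha1 := (S.pos (m+1)).1
  have hE1 := S.E_succ_nonneg m
  rcases le_or_gt (S.α (m+1)) (S.lam (m+2)) with h1 | h1
  · obtain ⟨ha, hθ⟩ := S.hcase1 (m+1) h1
    have hθ0 := (S.pos (m+1)).2
    have hE2 : S.E (m+2) = 1 / S.α (m+1) := by
      rw [show m+2 = (m+1)+1 from rfl, E_succ]; simp [h1]
    have hsq : S.α (m+2) ^ 2 = (1 + S.θ (m+1)) * S.α (m+1) ^ 2 := by
      rw [ha, mul_pow, Real.sq_sqrt (by linarith)]
    rw [hE2, hsq]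
    have hterm : 1 / S.α (m+1) * ((1 + S.θ (m+1)) * S.α (m+1) ^ 2)
        = (1 + S.θ (m+1)) * S.α (m+1) := by
      field_simp
    rw [hterm]
    rcases le_or_gt (S.α m) (S.lam (m+1)) with g1 | g1
    · have hE1' : S.E (m+1) = 1 / S.α m := by rw [E_succ]; simp [g1]
      have hθ' : S.θ (m+1) = S.α (m+1) / S.α m := (S.hcase1 m g1).2
      have ham := (S.pos m).1
      rw [hE1', hθ']
      have hz : S.α (m+1) + 1 / S.α m * S.α (m+1) ^ 2
          - (1 + S.α (m+1) / S.α m) * S.α (m+1) = 0 := by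
        field_simp
        ring
      linarith
    · have hθ' : S.θ (m+1) = 0 := by
        rcases le_or_gt (S.lam (m+1)) (S.α m / 2) with g3 | g2
        · exact (S.hcase3 m g3).2
        · exact (S.hcase2 m g2 g1).2
      have hE1' : S.E (m+1) = 0 := by rw [E_succ]; simp [not_le.mpr g1]
      rw [hθ', hE1']
      ring_nf
      simp
  · have hE2 : S.E (m+2) = 0 := by
      rw [show m+2 = (m+1)+1 from rfl, E_succ]; simp [not_le.mpr h1]
    rw [hE2]
    nlinarith [mul_nonneg hE1 (sq_nonneg (S.α (m+1))), ha1]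

lemma telescope (S : AdaPBB n) (xs : EuclideanSpace ℝ (Fin n)) (k : ℕ) (hk : 1 ≤ k) :
    S.U xs (k+1) + ∑ j ∈ Icc 1 k, 2 * S.w j * (S.F (S.x j) - S.F xs) ≤ S.U xs 1 := by
  induction k with
  | zero => omega
  | succ m ih =>
    rcases Nat.eq_zero_or_pos m with rfl | hm
    · simpa using S.onestep xs 0
    · have ih' := ih hm
      rw [Finset.sum_Icc_succ_top (by omega : 1 ≤ m + 1)]
      have ho := S.onestep xs m
      linarith

lemma sum_w (S : AdaPBB n) (k : ℕ) :
    ∑ j ∈ Icc 1 k, S.w j =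
      ∑ j ∈ Icc 1 k, S.α j + S.E 1 * S.α 1 ^ 2 - S.E (k+1) * S.α (k+1) ^ 2 := by
  induction k with
  | zero => simp
  | succ m ih =>
    rw [Finset.sum_Icc_succ_top (by omega : 1 ≤ m + 1),
      Finset.sum_Icc_succ_top (by omega : 1 ≤ m + 1) (f := S.α), ih]
    unfold w
    ring

end AdaPBB

end

/-- Theorem 5.12 (ergodic convergence of AdaPBB): with `w_k = α_k + E_kα_k² - E_{k+1}α_{k+1}²`,
`S_k = E_1α_1² + Σ_{i=1}^k α_i` and
`x̄^k = (α_k(1 + E_kα_k)·x^k + Σ_{i=1}^{k-1} w_i·x^i)/S_k`, one has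
`F(x̄^k) - F_* ≤ U_1/(2·S_k)` for every `k ≥ 1`. -/
theorem adapbb_ergodic_convergence (n : ℕ) (S : AdaPBB n)
    (xs : EuclideanSpace ℝ (Fin n)) (hxs : ∀ y, S.F xs ≤ S.F y)
    (k : ℕ) (hk : 1 ≤ k) :
    S.F ((S.E 1 * S.α 1 ^ 2 + ∑ i ∈ Finset.Icc 1 k, S.α i)⁻¹ •
        ((S.α k * (1 + S.E k * S.α k)) • S.x k +
          ∑ i ∈ Finset.Icc 1 (k - 1),
            (S.α i + S.E i * S.α i ^ 2 - S.E (i + 1) * S.α (i + 1) ^ 2) • S.x i)) - S.F xs ≤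
      S.U xs 1 / (2 * (S.E 1 * S.α 1 ^ 2 + ∑ i ∈ Finset.Icc 1 k, S.α i)) := by
  obtain ⟨m, rfl⟩ : ∃ m, k = m + 1 := ⟨k - 1, by omega⟩
  rw [show m + 1 - 1 = m from rfl]
  set W : ℕ → ℝ := fun i =>
    if i = m + 1 then S.α (m+1) * (1 + S.E (m+1) * S.α (m+1)) else S.w i with hW
  set Sk : ℝ := S.E 1 * S.α 1 ^ 2 + ∑ i ∈ Finset.Icc 1 (m+1), S.α i with hSk
  clear_value Sk
  have hsumW : ∑ i ∈ Finset.Icc 1 (m+1), W i = Sk := by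
    rw [Finset.sum_Icc_succ_top (by omega : 1 ≤ m + 1)]
    have h1 : ∑ i ∈ Finset.Icc 1 m, W i = ∑ i ∈ Finset.Icc 1 m, S.w i := by
      apply Finset.sum_congr rfl
      intro i hi
      have hne : i ≠ m + 1 := by have := (Finset.mem_Icc.mp hi).2; omega
      simp [hW, hne]
    rw [h1, S.sum_w m, hSk, Finset.sum_Icc_succ_top (by omega : 1 ≤ m + 1) (f := S.α)]
    simp only [hW, if_pos rfl]
    ring
  have hWnn : ∀ i ∈ Finset.Icc 1 (m+1), 0 ≤ W i := by
    intro i hi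
    rcases Finset.mem_Icc.mp hi with ⟨hi1, hi2⟩
    obtain ⟨j, rfl⟩ : ∃ j, i = j + 1 := ⟨i - 1, by omega⟩
    by_cases h : j + 1 = m + 1
    · rw [hW]; simp only [if_pos h]
      have hE := S.E_succ_nonneg m
      have ha := (S.pos (m+1)).1
      exact mul_nonneg ha.le (by nlinarith)
    · rw [hW]; simp only [if_neg h]; exact S.w_nonneg j
  have hE1nn : (0:ℝ) ≤ S.E 1 := S.E_succ_nonneg 0
  have hSpos : 0 < Sk := by
    rw [hSk]
    have hsum : 0 < ∑ i ∈ Finset.Icc 1 (m+1), S.α i :=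
      Finset.sum_pos (fun i _ => (S.pos i).1)
        ⟨1, Finset.mem_Icc.mpr ⟨le_refl 1, by omega⟩⟩
    nlinarith [mul_nonneg hE1nn (sq_nonneg (S.α 1))]
  have ht := S.telescope xs (m+1) (by omega)
  have hUlow : 2 * S.E (m+2) * S.α (m+2) ^ 2 * (S.F (S.x (m+1)) - S.F xs) ≤ S.U xs (m+2) := by
    unfold AdaPBB.U
    rw [show m + 2 - 1 = m + 1 from rfl]
    have h1 : (0:ℝ) ≤ ‖S.x (m+2) - xs‖ ^ 2 := sq_nonneg _
    have hB : (0:ℝ) ≤ S.B (m+2) := S.B_succ_nonneg (m+1)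
    have h2 : (0:ℝ) ≤ 2 * S.B (m+2) * S.α (m+2) ^ 2 * ‖S.f' (S.x (m+1)) + S.ξ (m+1)‖ ^ 2 :=
      mul_nonneg (mul_nonneg (mul_nonneg (by norm_num) hB) (sq_nonneg _)) (sq_nonneg _)
    linarith
  have hsum2 : ∑ i ∈ Finset.Icc 1 (m+1), 2 * W i * (S.F (S.x i) - S.F xs) ≤ S.U xs 1 := by
    rw [Finset.sum_Icc_succ_top (by omega : 1 ≤ m + 1)]
    have h1 : ∑ i ∈ Finset.Icc 1 m, 2 * W i * (S.F (S.x i) - S.F xs)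
        = ∑ i ∈ Finset.Icc 1 m, 2 * S.w i * (S.F (S.x i) - S.F xs) := by
      apply Finset.sum_congr rfl
      intro i hi
      have hne : i ≠ m + 1 := by have := (Finset.mem_Icc.mp hi).2; omega
      simp [hW, hne]
    rw [h1]
    rw [Finset.sum_Icc_succ_top (by omega : 1 ≤ m + 1)] at ht
    have heq : 2 * W (m+1) * (S.F (S.x (m+1)) - S.F xs)
        = 2 * S.w (m+1) * (S.F (S.x (m+1)) - S.F xs)
          + 2 * S.E (m+2) * S.α (m+2) ^ 2 * (S.F (S.x (m+1)) - S.F xs) := by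
      have h3 : W (m+1) = S.α (m+1) * (1 + S.E (m+1) * S.α (m+1)) := by simp [hW]
      rw [h3]; unfold AdaPBB.w; ring
    linarith
  have hFconv : ConvexOn ℝ Set.univ S.F := S.hfconv.add S.hgconv
  have hcm := hFconv.map_centerMass_le hWnn (by rw [hsumW]; exact hSpos)
    (fun i _ => Set.mem_univ (S.x i))
  have hpt : (Sk⁻¹ • ((S.α (m+1) * (1 + S.E (m+1) * S.α (m+1))) • S.x (m+1) +
      ∑ i ∈ Finset.Icc 1 m,
        (S.α i + S.E i * S.α i ^ 2 - S.E (i + 1) * S.α (i + 1) ^ 2) • S.x i))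
      = (Finset.Icc 1 (m+1)).centerMass W S.x := by
    rw [Finset.centerMass, hsumW, Finset.sum_Icc_succ_top (by omega : 1 ≤ m + 1)]
    congr 1
    have h2 : ∑ i ∈ Finset.Icc 1 m, W i • S.x i
        = ∑ i ∈ Finset.Icc 1 m,
          (S.α i + S.E i * S.α i ^ 2 - S.E (i + 1) * S.α (i + 1) ^ 2) • S.x i := by
      apply Finset.sum_congr rfl
      intro i hi
      have hne : i ≠ m + 1 := by have := (Finset.mem_Icc.mp hi).2; omega
      rw [hW]; simp only [if_neg hne]; rfl
    have h3 : W (m+1) = S.α (m+1) * (1 + S.E (m+1) * S.α (m+1)) := by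
      rw [hW]; simp
    rw [h2, h3, add_comm]
  rw [hpt]
  have hcm' : S.F ((Finset.Icc 1 (m+1)).centerMass W S.x)
      ≤ Sk⁻¹ * ∑ i ∈ Finset.Icc 1 (m+1), W i * S.F (S.x i) := by
    have h2 : (Finset.Icc 1 (m+1)).centerMass W (S.F ∘ S.x)
        = Sk⁻¹ * ∑ i ∈ Finset.Icc 1 (m+1), W i * S.F (S.x i) := by
      rw [Finset.centerMass, hsumW]
      simp [smul_eq_mul, Function.comp, Finset.mul_sum]
    rw [← h2]
    exact hcm
  have hS3 : ∑ i ∈ Finset.Icc 1 (m+1), W i * S.F (S.x i) ≤ S.U xs 1 / 2 + Sk * S.F xs := by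
    have hexp : ∑ i ∈ Finset.Icc 1 (m+1), 2 * W i * (S.F (S.x i) - S.F xs)
        = 2 * (∑ i ∈ Finset.Icc 1 (m+1), W i * S.F (S.x i)) - 2 * Sk * S.F xs := by
      calc ∑ i ∈ Finset.Icc 1 (m+1), 2 * W i * (S.F (S.x i) - S.F xs)
          = ∑ i ∈ Finset.Icc 1 (m+1),
              (2 * (W i * S.F (S.x i)) - 2 * S.F xs * W i) :=
            Finset.sum_congr rfl (fun i _ => by ring)
        _ = 2 * (∑ i ∈ Finset.Icc 1 (m+1), W i * S.F (S.x i))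
              - 2 * S.F xs * ∑ i ∈ Finset.Icc 1 (m+1), W i := by
            rw [Finset.sum_sub_distrib, Finset.mul_sum, Finset.mul_sum]
        _ = 2 * (∑ i ∈ Finset.Icc 1 (m+1), W i * S.F (S.x i)) - 2 * Sk * S.F xs := by
            rw [hsumW]; ring
    rw [hexp] at hsum2
    nlinarith [hsum2]
  have hmul := mul_le_mul_of_nonneg_left hS3 (inv_nonneg.mpr hSpos.le)
  have h9 : Sk⁻¹ * (S.U xs 1 / 2 + Sk * S.F xs) = Sk⁻¹ * (S.U xs 1 / 2) + S.F xs := by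
    field_simp
  have h10 : S.U xs 1 / (2 * Sk) = Sk⁻¹ * (S.U xs 1 / 2) := by
    rw [inv_mul_eq_div, div_div]
  rw [h10]
  linarith
end
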